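/- Let [F] be a class of multiclass classifiers X → Y with Natarajan dimension d_[F] < ∞, |Y| = c, let G be a class of transitions Y^M → S such that the binary function class {(y,s) ↦ 1{σ'(y) ≠ s} : σ' ∈ G} has VC dimension d_G < ∞. Then the binary class H = {(x,s) ↦ 1{σ'(f(x_1),...,f(x_M)) ≠ s} : f ∈ [F], σ' ∈ G} over X^M × S has VC dimension at most 2((d_[F] + d_G) log(6M(d_[F] + d_G)) + 2 d_[F] log c). -/

import Mathlib

set_option maxHeartbeats 1000000
open Finset

def BShatters {A : Type*} (H : Set (A → Bool)) (C : Finset A) : Prop :=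
  ∀ b : A → Bool, ∃ h ∈ H, ∀ x ∈ C, h x = b x

def NShatters {A B : Type*} (H : Set (A → B)) (C : Finset A) : Prop :=
  ∃ h₀ h₁ : A → B, (∀ x ∈ C, h₀ x ≠ h₁ x) ∧
    ∀ B' ⊆ C, ∃ h ∈ H, (∀ x ∈ B', h x = h₀ x) ∧ ∀ x ∈ C, x ∉ B' → h x = h₁ x

namespace VCAux

open Classical in
noncomputable def resC {A Y : Type*} [Nonempty Y] (C : Finset A) (f : A → Y) : A → Y :=
  fun a => if a ∈ C then f a else Classical.arbitrary Y

variable {A Y : Type*} [Nonempty Y]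

lemma resC_mem {C : Finset A} {a : A} (h : a ∈ C) (f : A → Y) : resC C f a = f a := by
  simp [resC, h]

lemma resC_not_mem {C : Finset A} {a : A} (h : a ∉ C) (f : A → Y) :
    resC C f a = Classical.arbitrary Y := by simp [resC, h]

lemma resC_image_finite [Finite Y] (C : Finset A) (F : Set (A → Y)) :
    (resC C '' F).Finite := by
  classical
  apply Set.Finite.subset (Set.finite_range
    (fun (t : {a // a ∈ C} → Y) => fun a => if h : a ∈ C then t ⟨a, h⟩ else Classical.arbitrary Y))
  rintro _ ⟨f, _, rfl⟩
  exact ⟨fun a => f a.1, by funext a; by_cases h : a ∈ C <;> simp [resC, h]⟩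

variable {x : A} {C' : Finset A}

lemma resC_pi [DecidableEq A] (f : A → Y) :
    resC C' (resC (insert x C') f) = resC C' f := by
  funext a; by_cases h : a ∈ C'
  · rw [resC_mem h, resC_mem h, resC_mem (mem_insert_of_mem h)]
  · rw [resC_not_mem h, resC_not_mem h]

lemma resC_eq_update [DecidableEq A] (hx : x ∉ C') {g : A → Y} {F : Set (A → Y)}
    (hg : g ∈ resC (insert x C') '' F) :
    g = Function.update (resC C' g) x (g x) := by
  obtain ⟨f, -, rfl⟩ := hg
  funext a
  by_cases hax : a = x
  · subst hax; rw [Function.update_self]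
  · rw [Function.update_of_ne hax]
    by_cases h : a ∈ C'
    · rw [resC_mem h]
    · rw [resC_not_mem h, resC_not_mem (by simp [hax, h])]

lemma resC_update [DecidableEq A] (hx : x ∉ C') {g' : A → Y} {F : Set (A → Y)}
    (hg' : g' ∈ resC C' '' F) (y : Y) :
    resC C' (Function.update g' x y) = g' := by
  obtain ⟨f, -, rfl⟩ := hg'
  funext a
  by_cases h : a ∈ C'
  · rw [resC_mem h, Function.update_of_ne (by rintro rfl; exact hx h)]
  · rw [resC_not_mem h, resC_not_mem h]

/-- If the "pair class" shatters `B ⊆ C'`, then `F` shatters `insert x B`. -/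
lemma shatters_pair [DecidableEq A] (hx : x ∉ C') {F : Set (A → Y)} {p : Y × Y}
    (hp : p.1 ≠ p.2) {B : Finset A} (hB : B ⊆ C')
    (hs : NShatters {f | f ∈ F ∧ f x = p.1 ∧
      ∃ f', f' ∈ F ∧ f' x = p.2 ∧ resC C' f' = resC C' f} B) :
    NShatters F (insert x B) := by
  obtain ⟨h0, h1, hne, hreal⟩ := hs
  refine ⟨Function.update h0 x p.1, Function.update h1 x p.2, ?_, ?_⟩
  · intro a ha
    rcases Finset.mem_insert.1 ha with rfl | haB
    · simpa using hp
    · have hax : a ≠ x := by rintro rfl; exact hx (hB haB)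
      rw [Function.update_of_ne hax, Function.update_of_ne hax]
      exact hne a haB
  · intro B' hB'
    have hB'' : B'.erase x ⊆ B := by
      intro a ha
      have h1a := Finset.mem_erase.1 ha
      rcases Finset.mem_insert.1 (hB' h1a.2) with e | h
      · exact absurd e h1a.1
      · exact h
    obtain ⟨g, hgGp, hg0, hg1⟩ := hreal (B'.erase x) hB''
    obtain ⟨hgF, hgx, f', hf'F, hf'x, hf'res⟩ := hgGp
    have hagree : ∀ a ∈ C', f' a = g a := by
      intro a ha
      have := congrFun hf'res a
      rwa [resC_mem ha, resC_mem ha] at this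
    by_cases hxB' : x ∈ B'
    · refine ⟨g, hgF, ?_, ?_⟩
      · intro a haB'
        by_cases hax : a = x
        · subst hax; rw [Function.update_self]; exact hgx
        · rw [Function.update_of_ne hax]
          exact hg0 a (Finset.mem_erase.2 ⟨hax, haB'⟩)
      · intro a haIns hanB'
        have hax : a ≠ x := by rintro rfl; exact hanB' hxB'
        have haB : a ∈ B := by
          rcases Finset.mem_insert.1 haIns with e | h
          · exact absurd e hax
          · exact h
        rw [Function.update_of_ne hax]
        exact hg1 a haB (fun hm => hanB' (Finset.mem_of_mem_erase hm))
    · refine ⟨f', hf'F, ?_, ?_⟩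
      · intro a haB'
        have hax : a ≠ x := by rintro rfl; exact hxB' haB'
        have haB'' : a ∈ B'.erase x := Finset.mem_erase.2 ⟨hax, haB'⟩
        rw [Function.update_of_ne hax, hagree a (hB (hB'' haB'')), hg0 a haB'']
      · intro a haIns hanB'
        by_cases hax : a = x
        · subst hax; rw [Function.update_self]; exact hf'x
        · have haB : a ∈ B := by
            rcases Finset.mem_insert.1 haIns with e | h
            · exact absurd e hax
            · exact h
          rw [Function.update_of_ne hax, hagree a (hB haB)]
          exact hg1 a haB (fun hm => hanB' (Finset.mem_of_mem_erase hm))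

theorem natarajan_core [Fintype Y] [DecidableEq Y] (K : ℕ) (hK : 1 ≤ K)
    (hP : (Finset.univ.filter fun p : Y × Y => p.1 ≠ p.2).card ≤ K) :
    ∀ (C : Finset A) (d : ℕ) (F : Set (A → Y)),
      (∀ B ⊆ C, NShatters F B → B.card ≤ d) →
      ∀ T : Finset (A → Y), ↑T ⊆ resC C '' F →
        T.card ≤ (C.card + 1) ^ d * K ^ d := by
  classical
  intro C
  induction C using Finset.induction_on with
  | empty =>
    intro d F _ T hT
    have h1 : T.card ≤ 1 := by
      refine Finset.card_le_one.2 fun g hg g₂ hg₂ => ?_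
      have e : ∀ g ∈ T, g = fun _ => Classical.arbitrary Y := by
        intro g hg
        obtain ⟨f, -, rfl⟩ := hT hg
        funext a
        exact resC_not_mem (Finset.notMem_empty a) f
      rw [e g hg, e g₂ hg₂]
    calc T.card ≤ 1 := h1
      _ ≤ (Finset.card ∅ + 1) ^ d * K ^ d := by
          simpa using Nat.one_le_pow d K (by omega)
  | @insert x C' hx ih =>
    intro d F hFd T hT
    have hπT' : ∀ g ∈ T, resC C' g ∈ resC C' '' F := by
      intro g hg
      obtain ⟨f, hf, rfl⟩ := hT hg
      rw [resC_pi]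
      exact ⟨f, hf, rfl⟩
    set ych : (A → Y) → Y := fun g' =>
      if h : ∃ y, Function.update g' x y ∈ T then h.choose else Classical.arbitrary Y
      with hychdef
    have hych : ∀ g ∈ T, Function.update (resC C' g) x (ych (resC C' g)) ∈ T := by
      intro g hg
      have hex : ∃ y, Function.update (resC C' g) x y ∈ T :=
        ⟨g x, by rw [← resC_eq_update hx (hT hg)]; exact hg⟩
      simpa only [hychdef, dif_pos hex] using hex.choose_spec
    set T' : Finset (A → Y) := T.image (resC C') with hT'def
    have hT'sub : ↑T' ⊆ resC C' '' F := by
      intro g' hg'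
      obtain ⟨g, hg, rfl⟩ := Finset.mem_image.1 (Finset.mem_coe.1 hg')
      exact hπT' g hg
    have hT'card : T'.card ≤ (C'.card + 1) ^ d * K ^ d :=
      ih d F (fun B hB hs => hFd B (hB.trans (Finset.subset_insert x C')) hs) T' hT'sub
    set T₁ := T.filter (fun g => g x = ych (resC C' g)) with hT₁def
    set T₂ := T.filter (fun g => ¬ (g x = ych (resC C' g))) with hT₂def
    have hsplit : T₁.card + T₂.card = T.card :=
      Finset.card_filter_add_card_filter_not _
    have hT₁ : T₁.card ≤ T'.card := by
      refine Finset.card_le_card_of_injOn (resC C')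
        (fun g hg => Finset.mem_image_of_mem _ (Finset.mem_filter.1 hg).1) ?_
      intro g hg g₂ hg₂ he
      obtain ⟨hgT, hgx⟩ := Finset.mem_filter.1 (Finset.mem_coe.1 hg)
      obtain ⟨hg₂T, hg₂x⟩ := Finset.mem_filter.1 (Finset.mem_coe.1 hg₂)
      calc g = Function.update (resC C' g) x (g x) := resC_eq_update hx (hT hgT)
        _ = Function.update (resC C' g₂) x (g₂ x) := by rw [hgx, he, hg₂x]
        _ = g₂ := (resC_eq_update hx (hT hg₂T)).symm
    set prs : Finset (Y × Y) := Finset.univ.filter (fun p : Y × Y => p.1 ≠ p.2) with hprsdef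
    set Tp : Y × Y → Finset (A → Y) := fun p =>
      T'.filter (fun g' => Function.update g' x p.1 ∈ T ∧ Function.update g' x p.2 ∈ T)
      with hTpdef
    have hT₂sum : T₂.card ≤ ∑ p ∈ prs, (Tp p).card := by
      have hmaps : ∀ g ∈ T₂, ((ych (resC C' g), g x), resC C' g) ∈
          prs.biUnion (fun p => (Tp p).image (fun g' => (p, g'))) := by
        intro g hg
        obtain ⟨hgT, hgx⟩ := Finset.mem_filter.1 hg
        refine Finset.mem_biUnion.2 ⟨(ych (resC C' g), g x), ?_, ?_⟩
        · exact Finset.mem_filter.2 ⟨Finset.mem_univ _, fun e => hgx e.symm⟩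
        · refine Finset.mem_image.2 ⟨resC C' g, ?_, rfl⟩
          refine Finset.mem_filter.2 ⟨Finset.mem_image_of_mem _ hgT, hych g hgT, ?_⟩
          rw [← resC_eq_update hx (hT hgT)]
          exact hgT
      calc T₂.card ≤ (prs.biUnion fun p => (Tp p).image (fun g' => (p, g'))).card := by
            refine Finset.card_le_card_of_injOn _ hmaps ?_
            intro g hg g₂ hg₂ he
            obtain ⟨hgT, -⟩ := Finset.mem_filter.1 (Finset.mem_coe.1 hg)
            obtain ⟨hg₂T, -⟩ := Finset.mem_filter.1 (Finset.mem_coe.1 hg₂)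
            have e1 : g x = g₂ x := congrArg (fun q => q.1.2) he
            have e2 : resC C' g = resC C' g₂ := congrArg Prod.snd he
            calc g = Function.update (resC C' g) x (g x) := resC_eq_update hx (hT hgT)
              _ = Function.update (resC C' g₂) x (g₂ x) := by rw [e1, e2]
              _ = g₂ := (resC_eq_update hx (hT hg₂T)).symm
        _ ≤ ∑ p ∈ prs, ((Tp p).image (fun g' => (p, g'))).card := Finset.card_biUnion_le
        _ ≤ ∑ p ∈ prs, (Tp p).card := Finset.sum_le_sum (fun p _ => Finset.card_image_le)
    have hTp : ∀ p ∈ prs, (Tp p).card ≤ (C'.card + 1) ^ (d - 1) * K ^ (d - 1) := by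
      intro p hp
      have hpne : p.1 ≠ p.2 := (Finset.mem_filter.1 hp).2
      set Gp : Set (A → Y) := {f | f ∈ F ∧ f x = p.1 ∧
        ∃ f', f' ∈ F ∧ f' x = p.2 ∧ resC C' f' = resC C' f} with hGpdef
      have hsub : ↑(Tp p) ⊆ resC C' '' Gp := by
        intro g' hg'
        obtain ⟨hg'T', hu1, hu2⟩ := Finset.mem_filter.1 (Finset.mem_coe.1 hg')
        have hg'im : g' ∈ resC C' '' F := hT'sub hg'T'
        have key : ∀ y : Y, Function.update g' x y ∈ T →
            ∃ f, f ∈ F ∧ f x = y ∧ resC C' f = g' := by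
          intro y hy
          obtain ⟨f₀, hf₀F, hf₀⟩ := hT hy
          have hf₀x : f₀ x = y := by
            have h1 := congrFun hf₀ x
            rwa [resC_mem (Finset.mem_insert_self x C'), Function.update_self] at h1
          have hres : resC C' f₀ = g' := by
            have h2 : resC C' (resC (insert x C') f₀)
                = resC C' (Function.update g' x y) := by rw [hf₀]
            rwa [resC_pi, resC_update hx hg'im] at h2
          exact ⟨f₀, hf₀F, hf₀x, hres⟩
        obtain ⟨f₀, hf₀F, hf₀x, hf₀res⟩ := key p.1 hu1
        obtain ⟨f₁, hf₁F, hf₁x, hf₁res⟩ := key p.2 hu2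
        exact ⟨f₀, ⟨hf₀F, hf₀x, f₁, hf₁F, hf₁x, by rw [hf₁res, hf₀res]⟩, hf₀res⟩
      have hdim : ∀ B ⊆ C', NShatters Gp B → B.card ≤ d - 1 := by
        intro B hB hs
        have hxB : x ∉ B := fun h => hx (hB h)
        have hc := hFd (insert x B) (Finset.insert_subset_insert x hB)
          (shatters_pair hx hpne hB hs)
        rw [Finset.card_insert_of_notMem hxB] at hc
        omega
      exact ih (d - 1) Gp hdim (Tp p) hsub
    rcases Nat.eq_zero_or_pos d with rfl | hd1
    · have hT₂empty : T₂ = ∅ := by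
        by_contra hne
        obtain ⟨g, hg⟩ := Finset.nonempty_iff_ne_empty.2 hne
        obtain ⟨hgT, hgx⟩ := Finset.mem_filter.1 hg
        obtain ⟨f₀, hf₀F, hf₀⟩ := hT hgT
        obtain ⟨f₁, hf₁F, hf₁⟩ := hT (hych g hgT)
        have hf₀x : f₀ x = g x := by
          have h1 := congrFun hf₀ x
          rwa [resC_mem (Finset.mem_insert_self x C')] at h1
        have hf₁x : f₁ x = ych (resC C' g) := by
          have h1 := congrFun hf₁ x
          rwa [resC_mem (Finset.mem_insert_self x C'), Function.update_self] at h1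
        have hshat : NShatters F {x} := by
          refine ⟨f₀, f₁, ?_, ?_⟩
          · intro a ha
            have hax : a = x := Finset.mem_singleton.1 ha
            subst hax
            rw [hf₀x, hf₁x]
            exact fun e => hgx e
          · intro B' hB'
            rcases Finset.subset_singleton_iff.1 hB' with rfl | rfl
            · exact ⟨f₁, hf₁F, fun a ha => absurd ha (Finset.notMem_empty a),
                fun a _ _ => rfl⟩
            · exact ⟨f₀, hf₀F, fun a _ => rfl, fun a ha hna => absurd ha hna⟩
        have hxx := hFd {x} (by simp) hshat
        simp at hxx
      have h0 : T₂.card = 0 := by rw [hT₂empty]; rfl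
      have hle1 : T'.card ≤ 1 := by simpa using hT'card
      have : T.card ≤ 1 := by omega
      simpa using this
    · obtain ⟨e, rfl⟩ : ∃ e, d = e + 1 := ⟨d - 1, by omega⟩
      have hsum : ∑ p ∈ prs, (Tp p).card ≤ K * ((C'.card + 1) ^ e * K ^ e) := by
        calc ∑ p ∈ prs, (Tp p).card ≤ prs.card • ((C'.card + 1) ^ e * K ^ e) :=
              Finset.sum_le_card_nsmul _ _ _ (fun p hp => by simpa using hTp p hp)
          _ = prs.card * ((C'.card + 1) ^ e * K ^ e) := smul_eq_mul _ _
          _ ≤ K * ((C'.card + 1) ^ e * K ^ e) := Nat.mul_le_mul_right _ hP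
      have hcard : (insert x C').card = C'.card + 1 := Finset.card_insert_of_notMem hx
      have hpow : (C'.card + 1) ^ e ≤ (C'.card + 2) ^ e := Nat.pow_le_pow_left (by omega) e
      calc T.card = T₁.card + T₂.card := hsplit.symm
        _ ≤ T'.card + ∑ p ∈ prs, (Tp p).card := Nat.add_le_add hT₁ hT₂sum
        _ ≤ (C'.card + 1) ^ (e+1) * K ^ (e+1) + K * ((C'.card + 1) ^ e * K ^ e) :=
              Nat.add_le_add hT'card hsum
        _ = (C'.card + 1) ^ e * (C'.card + 2) * K ^ (e+1) := by ring
        _ ≤ (C'.card + 2) ^ e * (C'.card + 2) * K ^ (e+1) :=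
              Nat.mul_le_mul_right _ (Nat.mul_le_mul_right _ hpow)
        _ = ((insert x C').card + 1) ^ (e+1) * K ^ (e+1) := by rw [hcard]; ring


lemma bshatters_of_nshatters {A : Type*} {H : Set (A → Bool)} {B : Finset A}
    (h : NShatters H B) : BShatters H B := by
  classical
  obtain ⟨h0, h1, hne, hreal⟩ := h
  intro b
  obtain ⟨g, hgH, hg0, hg1⟩ := hreal (B.filter fun a => b a = h0 a) (Finset.filter_subset _ _)
  refine ⟨g, hgH, fun a ha => ?_⟩
  by_cases hb : b a = h0 a
  · rw [hg0 a (Finset.mem_filter.2 ⟨ha, hb⟩), hb]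
  · have hg : g a = h1 a := hg1 a ha (fun hm => hb (Finset.mem_filter.1 hm).2)
    have hha := hne a ha
    rw [hg]
    cases hb0 : h0 a <;> cases hb1 : h1 a <;> cases hba : b a <;> simp_all

lemma arith (d M c dF dG : ℕ) (hM : 1 ≤ M) (hc : 1 ≤ c)
    (hkey : 2 ^ d ≤ (M * d + 1) ^ dF * (c ^ 2) ^ dF * ((d + 1) ^ dG * 2 ^ dG)) :
    (d : ℝ) ≤ 2 * ((dF + dG) * Real.log (6 * M * (dF + dG)) + 2 * dF * Real.log c) := by
  rcases Nat.eq_zero_or_pos (dF + dG) with hk0 | hk1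
  · have h1 : dF = 0 := by omega
    have h2 : dG = 0 := by omega
    subst h1; subst h2
    simp only [pow_zero, one_mul, mul_one] at hkey
    have hd0 : d = 0 := by
      have : d < 2 ^ d := Nat.lt_two_pow_self
      omega
    subst hd0
    norm_num
  · have hk1' : (1:ℝ) ≤ (dF:ℝ) + dG := by exact_mod_cast hk1
    have hM' : (1:ℝ) ≤ (M:ℝ) := by exact_mod_cast hM
    have hc' : (1:ℝ) ≤ (c:ℝ) := by exact_mod_cast hc
    have hd0 : (0:ℝ) ≤ (d:ℝ) := Nat.cast_nonneg d
    have hdF0 : (0:ℝ) ≤ (dF:ℝ) := Nat.cast_nonneg dF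
    have hdG0 : (0:ℝ) ≤ (dG:ℝ) := Nat.cast_nonneg dG
    have hkeyR : (2:ℝ) ^ d ≤ ((M:ℝ) * d + 1) ^ dF * ((c:ℝ) ^ 2) ^ dF
        * (((d:ℝ) + 1) ^ dG * 2 ^ dG) := by exact_mod_cast hkey
    have hlog : (d:ℝ) * Real.log 2 ≤
        (dF:ℝ) * Real.log ((M:ℝ) * d + 1) + (dF:ℝ) * (2 * Real.log c)
          + ((dG:ℝ) * Real.log ((d:ℝ) + 1) + (dG:ℝ) * Real.log 2) := by
      have h1 := Real.log_le_log (by positivity) hkeyR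
      rw [Real.log_pow, Real.log_mul (by positivity) (by positivity),
        Real.log_mul (by positivity) (by positivity),
        Real.log_mul (by positivity) (by positivity),
        Real.log_pow, Real.log_pow, Real.log_pow, Real.log_pow, Real.log_pow] at h1
      push_cast at h1 ⊢
      linarith
    have hlM : 0 ≤ Real.log M := Real.log_nonneg hM'
    have hlc : 0 ≤ Real.log c := Real.log_nonneg hc'
    have hld : 0 ≤ Real.log ((d:ℝ) + 1) := Real.log_nonneg (by linarith)
    have hl2lo := Real.log_two_gt_d9
    have hl2hi := Real.log_two_lt_d9
    have hlogM : Real.log ((M:ℝ) * d + 1) ≤ Real.log M + Real.log ((d:ℝ) + 1) := by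
      have hle : (M:ℝ) * d + 1 ≤ (M:ℝ) * ((d:ℝ) + 1) := by nlinarith
      calc Real.log ((M:ℝ) * d + 1) ≤ Real.log ((M:ℝ) * ((d:ℝ) + 1)) :=
            Real.log_le_log (by positivity) hle
        _ = Real.log M + Real.log ((d:ℝ) + 1) :=
            Real.log_mul (by positivity) (by positivity)
    have htay : Real.log ((d:ℝ) + 1) ≤
        ((d:ℝ) + 1) / (6 * ((dF:ℝ) + dG)) + Real.log (6 * ((dF:ℝ) + dG)) - 1 := by
      have h0 : (0:ℝ) < ((d:ℝ) + 1) / (6 * ((dF:ℝ) + dG)) := by positivity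
      have h1 := Real.log_le_sub_one_of_pos h0
      rw [Real.log_div (by positivity) (by positivity)] at h1
      linarith
    have hA : Real.log (6 * (M:ℝ) * ((dF:ℝ) + dG))
        = Real.log M + Real.log (6 * ((dF:ℝ) + dG)) := by
      rw [show (6:ℝ) * (M:ℝ) * ((dF:ℝ) + dG) = (M:ℝ) * (6 * ((dF:ℝ) + dG)) by ring,
        Real.log_mul (by positivity) (by positivity)]
    have hA4 : 2 * Real.log 2 ≤ Real.log (6 * (M:ℝ) * ((dF:ℝ) + dG)) := by
      have h4 : Real.log 4 ≤ Real.log (6 * (M:ℝ) * ((dF:ℝ) + dG)) :=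
        Real.log_le_log (by norm_num) (by nlinarith)
      have h42 : Real.log 4 = 2 * Real.log 2 := by
        rw [show (4:ℝ) = 2 ^ (2:ℕ) by norm_num, Real.log_pow]
        norm_num
      linarith
    have hdFk : (dF:ℝ) ≤ (dF:ℝ) + dG := by linarith
    have hdGk : (dG:ℝ) ≤ (dF:ℝ) + dG := by linarith
    have hdiv : ((dF:ℝ) + dG) * (((d:ℝ) + 1) / (6 * ((dF:ℝ) + dG))) = ((d:ℝ) + 1) / 6 := by
      have hne : (dF:ℝ) + dG ≠ 0 := by linarith
      field_simp
    have hmain : (d:ℝ) * (Real.log 2 - 1/6) ≤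
        ((dF:ℝ) + dG) * Real.log (6 * (M:ℝ) * ((dF:ℝ) + dG)) + 2 * (dF:ℝ) * Real.log c
          + ((dF:ℝ) + dG) * (Real.log 2 - 1) + 1/6 := by
      have h1 : (dF:ℝ) * Real.log ((M:ℝ) * d + 1) ≤
          (dF:ℝ) * (Real.log M + Real.log ((d:ℝ) + 1)) :=
        mul_le_mul_of_nonneg_left hlogM hdF0
      have h2 : (dF:ℝ) * Real.log M ≤ ((dF:ℝ) + dG) * Real.log M :=
        mul_le_mul_of_nonneg_right hdFk hlM
      have h3 : (dG:ℝ) * Real.log 2 ≤ ((dF:ℝ) + dG) * Real.log 2 :=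
        mul_le_mul_of_nonneg_right hdGk (by linarith)
      have h4 : ((dF:ℝ) + dG) * Real.log ((d:ℝ) + 1) ≤
          ((dF:ℝ) + dG) * (((d:ℝ) + 1) / (6 * ((dF:ℝ) + dG))
            + Real.log (6 * ((dF:ℝ) + dG)) - 1) :=
        mul_le_mul_of_nonneg_left htay (by linarith)
      rw [mul_sub, mul_add, hdiv] at h4
      have h5 : ((dF:ℝ) + dG) * Real.log M + ((dF:ℝ) + dG) * Real.log (6 * ((dF:ℝ) + dG))
          = ((dF:ℝ) + dG) * Real.log (6 * (M:ℝ) * ((dF:ℝ) + dG)) := by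
        rw [hA]; ring
      linarith [hlog, h1, h2, h3, h4, h5]
    have hAk : ((dF:ℝ) + dG) * (2 * Real.log 2) ≤
        ((dF:ℝ) + dG) * Real.log (6 * (M:ℝ) * ((dF:ℝ) + dG)) :=
      mul_le_mul_of_nonneg_left hA4 (by linarith)
    have hL0 : 0 ≤ 2 * (dF:ℝ) * Real.log c := by positivity
    have hP1 : (0:ℝ) ≤ (Real.log 2 - 0.6931471803) * ((dF:ℝ) + dG) :=
      mul_nonneg (by linarith) (by linarith)
    have hsum : 1.3862943606 * ((dF:ℝ) + dG) ≤
        ((dF:ℝ) + dG) * Real.log (6 * (M:ℝ) * ((dF:ℝ) + dG)) + 2 * (dF:ℝ) * Real.log c := by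
      linarith [hAk, hP1, hL0]
    have hbig : 0.0529610272 * (1.3862943606 * ((dF:ℝ) + dG)) ≤
        (2 * Real.log 2 - 4/3) *
          (((dF:ℝ) + dG) * Real.log (6 * (M:ℝ) * ((dF:ℝ) + dG)) + 2 * (dF:ℝ) * Real.log c) := by
      refine mul_le_mul (by linarith) hsum (mul_nonneg (by norm_num) (by linarith)) (by linarith)
    have hP2 : (0:ℝ) ≤ (1 - Real.log 2 - 0.3068528192) * ((dF:ℝ) + dG) :=
      mul_nonneg (by linarith) (by linarith)
    have hfin : ((dF:ℝ) + dG) * Real.log (6 * (M:ℝ) * ((dF:ℝ) + dG)) + 2 * (dF:ℝ) * Real.log c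
          + ((dF:ℝ) + dG) * (Real.log 2 - 1) + 1/6 ≤
        (Real.log 2 - 1/6) *
          (2 * (((dF:ℝ) + dG) * Real.log (6 * (M:ℝ) * ((dF:ℝ) + dG))
            + 2 * (dF:ℝ) * Real.log c)) := by
      linarith [hbig, hP2, hk1']
    have hpos : (0:ℝ) < Real.log 2 - 1/6 := by linarith
    have hcombined := hmain.trans hfin
    rw [mul_comm] at hcombined
    exact le_of_mul_le_mul_left hcombined hpos

end VCAux

open VCAux

/-- VC dimension bound for the class `{(x,s) ↦ 1{σ'(f(x₁),…,f(x_M)) ≠ s}}`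
induced by a Natarajan class `F` of classifiers and a transition class `G`. -/
theorem stmt10 {X Y S : Type*} [Fintype Y] [DecidableEq S]
    (c M : ℕ) (hc : Fintype.card Y = c) (hM : 1 ≤ M)
    (F : Set (X → Y)) (G : Set ((Fin M → Y) → S))
    (dF dG : ℕ)
    (hdF : ∀ C : Finset X, NShatters F C → C.card ≤ dF)
    (hdG : ∀ C : Finset ((Fin M → Y) × S),
      BShatters {h | ∃ σ' ∈ G, h = fun p => decide (σ' p.1 ≠ p.2)} C → C.card ≤ dG) :
    ∀ C : Finset ((Fin M → X) × S),
      BShatters {h | ∃ f ∈ F, ∃ σ' ∈ G,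
          h = fun p => decide (σ' (fun i => f (p.1 i)) ≠ p.2)} C →
        (C.card : ℝ)
          ≤ 2 * ((dF + dG) * Real.log (6 * M * (dF + dG)) + 2 * dF * Real.log c) := by
  classical
  intro C hC
  have hRHS : (0:ℝ) ≤ 2 * ((dF + dG) * Real.log (6 * M * (dF + dG)) + 2 * dF * Real.log c) := by
    have h1 : 0 ≤ Real.log (6 * (M:ℝ) * ((dF:ℝ) + dG)) := by
      rcases Nat.eq_zero_or_pos (dF + dG) with h | h
      · have e1 : dF = 0 := by omega
        have e2 : dG = 0 := by omega
        simp [e1, e2]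
      · apply Real.log_nonneg
        have h1 : (1:ℝ) ≤ (dF:ℝ) + dG := by exact_mod_cast h
        have h2 : (1:ℝ) ≤ (M:ℝ) := by exact_mod_cast hM
        nlinarith
    have h2 : 0 ≤ Real.log (c:ℝ) := by
      rcases Nat.eq_zero_or_pos c with h | h
      · simp [h]
      · exact Real.log_nonneg (by exact_mod_cast h)
    have h3 : (0:ℝ) ≤ (dF:ℝ) := Nat.cast_nonneg dF
    have h4 : (0:ℝ) ≤ (dG:ℝ) := Nat.cast_nonneg dG
    nlinarith
  rcases Finset.eq_empty_or_nonempty C with rfl | ⟨p₀, hp₀⟩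
  · simpa using hRHS
  obtain ⟨h₀, hmem₀, -⟩ := hC (fun _ => true)
  obtain ⟨f₀, hf₀F, σ₀, hσ₀G, -⟩ := hmem₀
  haveI hY : Nonempty Y := ⟨f₀ (p₀.1 ⟨0, hM⟩)⟩
  have hc1 : 1 ≤ c := by rw [← hc]; exact Fintype.card_pos
  set P : Finset X := C.biUnion (fun pr => Finset.image pr.1 Finset.univ) with hPdef
  have hPcard : P.card ≤ M * C.card := by
    rw [hPdef]
    calc (C.biUnion (fun pr => Finset.image pr.1 Finset.univ)).card
        ≤ ∑ pr ∈ C, (Finset.image pr.1 Finset.univ).card := Finset.card_biUnion_le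
      _ ≤ ∑ _pr ∈ C, M := Finset.sum_le_sum (fun pr _ => by
            calc (Finset.image pr.1 Finset.univ).card
                ≤ (Finset.univ : Finset (Fin M)).card := Finset.card_image_le
              _ = M := by simp)
      _ = M * C.card := by rw [Finset.sum_const, smul_eq_mul, Nat.mul_comm]
  set Gcl : Set (((Fin M → Y) × S) → Bool) :=
    {h | ∃ σ' ∈ G, h = fun p => decide (σ' p.1 ≠ p.2)} with hGcldef
  set Qr : (X → Y) → Finset ((Fin M → Y) × S) :=
    fun r => C.image (fun pr => ((fun i => r (pr.1 i)), pr.2)) with hQrdef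
  have hTFfin : (resC P '' F).Finite := resC_image_finite P F
  have hTGfin : ∀ r, ((resC (Qr r) '' Gcl)).Finite := fun r => resC_image_finite (Qr r) Gcl
  set TF := hTFfin.toFinset with hTFdef
  have hTFcard : TF.card ≤ (M * C.card + 1) ^ dF * (c ^ 2) ^ dF := by
    have h1 : (Finset.univ.filter fun p : Y × Y => p.1 ≠ p.2).card ≤ c ^ 2 := by
      calc (Finset.univ.filter fun p : Y × Y => p.1 ≠ p.2).card
          ≤ (Finset.univ : Finset (Y × Y)).card := Finset.card_filter_le _ _
        _ = c ^ 2 := by rw [Finset.card_univ, Fintype.card_prod, hc]; ring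
    have h2 := natarajan_core (A := X) (Y := Y) (c ^ 2)
      (Nat.one_le_pow _ _ (by omega)) h1 P dF F
      (fun B _ hs => hdF B hs) TF
      (by rw [hTFdef]; exact subset_of_eq (Set.Finite.coe_toFinset _))
    calc TF.card ≤ (P.card + 1) ^ dF * (c ^ 2) ^ dF := h2
      _ ≤ (M * C.card + 1) ^ dF * (c ^ 2) ^ dF :=
          Nat.mul_le_mul_right _ (Nat.pow_le_pow_left (by
            have := hPcard; omega) dF)
  have hTGcard : ∀ r, (hTGfin r).toFinset.card ≤ (C.card + 1) ^ dG * 2 ^ dG := by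
    intro r
    have h1 : (Finset.univ.filter fun p : Bool × Bool => p.1 ≠ p.2).card ≤ 2 := by decide
    have h2 := natarajan_core (A := (Fin M → Y) × S) (Y := Bool) 2 (by omega) h1
      (Qr r) dG Gcl
      (fun B _ hs => hdG B (bshatters_of_nshatters hs)) (hTGfin r).toFinset
      (subset_of_eq (Set.Finite.coe_toFinset _))
    have h3 : (Qr r).card ≤ C.card := by
      rw [hQrdef]; exact Finset.card_image_le
    calc (hTGfin r).toFinset.card ≤ ((Qr r).card + 1) ^ dG * 2 ^ dG := h2
      _ ≤ (C.card + 1) ^ dG * 2 ^ dG :=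
          Nat.mul_le_mul_right _ (Nat.pow_le_pow_left (by omega) dG)
  have key : ∀ b : {p // p ∈ C} → Bool, ∃ f, f ∈ F ∧ ∃ σ', σ' ∈ G ∧
      ∀ p : {p // p ∈ C}, decide (σ' (fun i => f (p.1.1 i)) ≠ p.1.2) = b p := by
    intro b
    obtain ⟨h, hh, hhb⟩ := hC (fun q => if hq : q ∈ C then b ⟨q, hq⟩ else false)
    obtain ⟨f, hfF, σ', hσ'G, rfl⟩ := hh
    refine ⟨f, hfF, σ', hσ'G, fun p => ?_⟩
    have h2 := hhb p.1 p.2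
    rw [dif_pos p.2] at h2
    simpa using h2
  choose fb hfb σb hσb hb using key
  have hcount : (2:ℕ) ^ C.card ≤ TF.card * ((C.card + 1) ^ dG * 2 ^ dG) := by
    set Ψ : ({p // p ∈ C} → Bool) → (X → Y) × (((Fin M → Y) × S) → Bool) :=
      fun b => (resC P (fb b),
        resC (Qr (resC P (fb b))) (fun q => decide (σb b q.1 ≠ q.2))) with hΨdef
    have hmaps : ∀ b : {p // p ∈ C} → Bool, b ∈ (Finset.univ : Finset _) → Ψ b ∈
        TF.biUnion (fun r => ((hTGfin r).toFinset).image (fun w => (r, w))) := by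
      intro b _
      refine Finset.mem_biUnion.2 ⟨resC P (fb b), ?_, ?_⟩
      · rw [hTFdef]; exact (Set.Finite.mem_toFinset _).2 ⟨fb b, hfb b, rfl⟩
      · refine Finset.mem_image.2 ⟨resC (Qr (resC P (fb b))) (fun q => decide (σb b q.1 ≠ q.2)),
          (Set.Finite.mem_toFinset _).2
            ⟨fun q => decide (σb b q.1 ≠ q.2), ⟨σb b, hσb b, rfl⟩, rfl⟩, rfl⟩
    have hinj : Set.InjOn Ψ ↑(Finset.univ : Finset ({p // p ∈ C} → Bool)) := by
      intro b _ b₂ _ he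
      have e1 : resC P (fb b) = resC P (fb b₂) := congrArg Prod.fst he
      have e2 : resC (Qr (resC P (fb b))) (fun q => decide (σb b q.1 ≠ q.2))
          = resC (Qr (resC P (fb b₂))) (fun q => decide (σb b₂ q.1 ≠ q.2)) :=
        congrArg Prod.snd he
      funext p
      have hmemP : ∀ i : Fin M, p.1.1 i ∈ P := by
        intro i
        rw [hPdef]
        exact Finset.mem_biUnion.2 ⟨p.1, p.2, Finset.mem_image.2 ⟨i, Finset.mem_univ i, rfl⟩⟩
      have hq : ((fun i => resC P (fb b) (p.1.1 i)), p.1.2) ∈ Qr (resC P (fb b)) := by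
        rw [hQrdef]
        exact Finset.mem_image.2 ⟨p.1, p.2, rfl⟩
      have hq₂ : ((fun i => resC P (fb b) (p.1.1 i)), p.1.2) ∈ Qr (resC P (fb b₂)) := by
        rw [← e1]; exact hq
      calc b p = decide (σb b (fun i => fb b (p.1.1 i)) ≠ p.1.2) := (hb b p).symm
        _ = decide (σb b (fun i => resC P (fb b) (p.1.1 i)) ≠ p.1.2) := by
            have e3 : (fun i => fb b (p.1.1 i)) = (fun i => resC P (fb b) (p.1.1 i)) :=
              funext fun i => (resC_mem (hmemP i) (fb b)).symm
            rw [e3]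
        _ = resC (Qr (resC P (fb b))) (fun q => decide (σb b q.1 ≠ q.2))
              ((fun i => resC P (fb b) (p.1.1 i)), p.1.2) :=
            (resC_mem hq (fun q => decide (σb b q.1 ≠ q.2))).symm
        _ = resC (Qr (resC P (fb b₂))) (fun q => decide (σb b₂ q.1 ≠ q.2))
              ((fun i => resC P (fb b) (p.1.1 i)), p.1.2) := by rw [e2]
        _ = decide (σb b₂ (fun i => resC P (fb b) (p.1.1 i)) ≠ p.1.2) :=
            resC_mem hq₂ (fun q => decide (σb b₂ q.1 ≠ q.2))
        _ = decide (σb b₂ (fun i => fb b₂ (p.1.1 i)) ≠ p.1.2) := by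
            have e4 : (fun i => resC P (fb b) (p.1.1 i)) = (fun i => fb b₂ (p.1.1 i)) := by
              rw [e1]; exact funext fun i => resC_mem (hmemP i) (fb b₂)
            rw [e4]
        _ = b₂ p := hb b₂ p
    calc (2:ℕ) ^ C.card = (Finset.univ : Finset ({p // p ∈ C} → Bool)).card := by
          simp [Fintype.card_fun]
      _ ≤ (TF.biUnion fun r => ((hTGfin r).toFinset).image (fun w => (r, w))).card :=
          Finset.card_le_card_of_injOn Ψ hmaps hinj
      _ ≤ ∑ r ∈ TF, (((hTGfin r).toFinset).image (fun w => (r, w))).card :=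
          Finset.card_biUnion_le
      _ ≤ ∑ _r ∈ TF, ((C.card + 1) ^ dG * 2 ^ dG) :=
          Finset.sum_le_sum (fun r _ => (Finset.card_image_le).trans (hTGcard r))
      _ = TF.card * ((C.card + 1) ^ dG * 2 ^ dG) := by
          rw [Finset.sum_const, smul_eq_mul]
  have hkey : 2 ^ C.card ≤ (M * C.card + 1) ^ dF * (c ^ 2) ^ dF
      * ((C.card + 1) ^ dG * 2 ^ dG) :=
    hcount.trans (Nat.mul_le_mul_right _ hTFcard)
  exact arith C.card M c dF dG hM hc1 hkey
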